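/- If G is a finite nilpotent cut group, then every prime dividing |G| is 2 or 3. -/

import Mathlib

/-- A finite group is a *cut group* (inverse semi-rational) if for every element `x`
and every integer `j` coprime to the order of `x`, `x ^ j` is conjugate to `x` or to `x⁻¹`. -/
def IsCutGroup (G : Type*) [Group G] : Prop :=
  ∀ x : G, ∀ j : ℤ, Int.gcd j (orderOf x) = 1 →
    IsConj (x ^ j) x ∨ IsConj (x ^ j) x⁻¹


/-- The center of a nontrivial finite nilpotent group is nontrivial. -/
lemma center_nontrivial_of_nilpotent (G : Type*) [Group G] [Nontrivial G]
    [Group.IsNilpotent G] : Nontrivial (Subgroup.center G) := by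
  by_contra h
  have hbot : Subgroup.center G = ⊥ := by
    by_contra hne
    exact h (((Subgroup.center G).nontrivial_iff_ne_bot).mpr hne)
  have hucs : ∀ n, Subgroup.upperCentralSeries G n = ⊥ := by
    intro n
    induction n with
    | zero => simp [Subgroup.upperCentralSeries_zero]
    | succ n ih =>
      ext x
      simp only [Subgroup.mem_bot]
      constructor
      · intro hx
        have hx' := (mem_upperCentralSeries_succ_iff).mp hx
        have hc : x ∈ Subgroup.center G := by
          rw [Subgroup.mem_center_iff]
          intro y
          have hcom := hx' y
          rw [ih, Subgroup.mem_bot] at hcom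
          have hxy : x * y * x⁻¹ = y := by
            have h2 : x * y * x⁻¹ * y⁻¹ * y = 1 * y := by rw [← commutatorElement_def, hcom]
            group at h2
            simpa using h2
          calc y * x = (x * y * x⁻¹) * x := by rw [hxy]
            _ = x * y := by group
        rw [hbot, Subgroup.mem_bot] at hc
        exact hc
      · rintro rfl; exact Subgroup.one_mem _
  obtain ⟨n, hn⟩ := Group.IsNilpotent.nilpotent (G := G)
  rw [hucs n] at hn
  obtain ⟨a, b, hab⟩ := exists_pair_ne G
  apply hab
  have ha : a ∈ (⊥ : Subgroup G) := hn ▸ Subgroup.mem_top a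
  have hb : b ∈ (⊥ : Subgroup G) := hn ▸ Subgroup.mem_top b
  rw [Subgroup.mem_bot] at ha hb
  rw [ha, hb]

lemma isCutGroup_quotient' {G : Type*} [Group G] [Finite G] (N : Subgroup G) [N.Normal]
    (hG : ∀ x : G, ∀ j : ℤ, Int.gcd j (orderOf x) = 1 →
      IsConj (x ^ j) x ∨ IsConj (x ^ j) x⁻¹) :
    ∀ x : G ⧸ N, ∀ j : ℤ, Int.gcd j (orderOf x) = 1 →
      IsConj (x ^ j) x ∨ IsConj (x ^ j) x⁻¹ := by
  intro xbar j hj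
  obtain ⟨x, rfl⟩ := QuotientGroup.mk_surjective xbar
  set π : G →* G ⧸ N := QuotientGroup.mk' N with hπ
  show IsConj (π x ^ j) (π x) ∨ IsConj (π x ^ j) (π x)⁻¹
  set m : ℕ := orderOf (π x) with hm
  set n : ℕ := orderOf x with hn
  have hmn : m ∣ n := orderOf_map_dvd π x
  have hnpos : 0 < n := orderOf_pos x
  have hmpos : 0 < m := Nat.pos_of_dvd_of_pos hmn hnpos
  haveI : NeZero n := ⟨hnpos.ne'⟩
  haveI : NeZero m := ⟨hmpos.ne'⟩
  -- a : ℕ with a ≡ j mod m, coprime to m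
  set a : ℕ := (j % (m : ℤ)).toNat with ha
  have haj : (a : ℤ) = j % (m : ℤ) :=
    Int.toNat_of_nonneg (Int.emod_nonneg j (by exact_mod_cast hmpos.ne'))
  have hjm : (a : ℤ) ≡ j [ZMOD (m : ℤ)] := by
    rw [haj]; exact Int.emod_emod_of_dvd j dvd_rfl
  have hja : (π x) ^ j = (π x) ^ (a : ℤ) := by
    rw [zpow_eq_zpow_iff_modEq]
    exact_mod_cast hjm.symm
  -- a is coprime to m
  have hacop : Nat.Coprime a m := by
    have hcopj : IsCoprime j (m : ℤ) := Int.isCoprime_iff_gcd_eq_one.mpr hj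
    have heq : (a : ℤ) = j + (m : ℤ) * (-(j / (m : ℤ))) := by
      rw [haj, Int.emod_def]; ring
    have : IsCoprime ((a : ℤ)) ((m : ℤ)) := heq ▸ hcopj.add_mul_left_left _
    have h1 : Int.gcd (a : ℤ) (m : ℤ) = 1 := Int.isCoprime_iff_gcd_eq_one.mp this
    simpa [Int.gcd_natCast_natCast] using h1
  -- lift to a unit mod n
  have hu : IsUnit (a : ZMod m) := (ZMod.isUnit_iff_coprime a m).mpr hacop
  obtain ⟨u, hu'⟩ := ZMod.unitsMap_surjective hmn hu.unit
  set b : ℕ := ((u : ZMod n)).val with hb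
  have hbcop : Nat.Coprime b n := ZMod.val_coe_unit_coprime u
  have hba : (b : ZMod m) = (a : ZMod m) := by
    have := congrArg (fun w : (ZMod m)ˣ => (w : ZMod m)) hu'
    simp only [ZMod.unitsMap, Units.coe_map, IsUnit.unit_spec] at this
    rw [← this]
    simp [hb, ZMod.natCast_val, ZMod.castHom_apply]
  have hbamod : b ≡ a [MOD m] := (ZMod.natCast_eq_natCast_iff _ _ _).mp hba
  have hxb : (π x) ^ (a : ℤ) = (π x) ^ (b : ℤ) := by
    rw [zpow_natCast, zpow_natCast, pow_eq_pow_iff_modEq]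
    exact hbamod.symm
  have hgcd : Int.gcd (b : ℤ) (orderOf x) = 1 := by
    simpa [Int.gcd_natCast_natCast] using hbcop
  rcases hG x b hgcd with h | h
  · left
    have := π.map_isConj h
    rw [map_zpow] at this
    rw [hja, hxb]
    exact this
  · right
    have := π.map_isConj h
    rw [map_zpow, map_inv] at this
    rw [hja, hxb]
    exact this


/-- The cut property passes to quotients. -/
lemma isCutGroup_quotient {G : Type*} [Group G] [Finite G] (N : Subgroup G) [N.Normal]
    (hG : IsCutGroup G) : IsCutGroup (G ⧸ N) := isCutGroup_quotient' N hG

lemma stmt_aux : ∀ (n : ℕ) (G : Type*) [Group G] [Finite G] [Group.IsNilpotent G],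
    Nat.card G = n → IsCutGroup G → ∀ p : ℕ, p.Prime → p ∣ n → p = 2 ∨ p = 3 := by
  intro n
  induction n using Nat.strong_induction_on with
  | _ n ih =>
    intro G _ _ _ hcard hG p hp hpn
    by_cases hp2 : p = 2
    · exact Or.inl hp2
    haveI : Fact p.Prime := ⟨hp⟩
    have hnpos : 0 < n := hcard ▸ Nat.card_pos
    have hntriv : Nontrivial G := by
      rw [← Finite.one_lt_card_iff_nontrivial, hcard]
      rcases Nat.lt_or_ge n 2 with h | h
      · interval_cases n
        · exact absurd hpn (by simpa using hp.one_lt.ne')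
      · omega
    haveI := center_nontrivial_of_nilpotent G
    by_cases hdvd : p ∣ Nat.card (Subgroup.center G)
    · obtain ⟨z, hz⟩ := exists_prime_orderOf_dvd_card' (G := Subgroup.center G) p hdvd
      set x : G := (z : G) with hxdef
      have hx : orderOf x = p := by
        rw [← hz]
        exact orderOf_injective (Subgroup.center G).subtype Subtype.val_injective z
      have hxc : x ∈ Subgroup.center G := z.2
      have h2p : ¬ 2 ∣ p := fun h =>
        hp2 ((Nat.prime_dvd_prime_iff_eq Nat.prime_two hp).mp h).symm
      have hgcd : Int.gcd 2 (orderOf x) = 1 := by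
        rw [hx]
        have : Nat.Coprime 2 p := (Nat.coprime_primes Nat.prime_two hp).mpr
          (fun h => hp2 h.symm)
        simpa [Int.gcd] using this
      have hx2c : x ^ (2:ℤ) ∈ Subgroup.center G := Subgroup.zpow_mem _ hxc 2
      rcases hG x 2 hgcd with h | h
      · exfalso
        obtain ⟨c, hc⟩ := isConj_iff.mp h
        have hcent : c * x ^ (2:ℤ) * c⁻¹ = x ^ (2:ℤ) := by
          rw [(Subgroup.mem_center_iff.mp hx2c) c]; group
        have : x ^ (2:ℤ) = x := hcent.symm.trans hc
        have hx1 : x = 1 := by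
          have : x ^ (2:ℤ) = x ^ (1:ℤ) := by simpa using this
          have h21 : x * x = x * 1 := by
            have := this
            rw [zpow_two, zpow_one] at this; rw [mul_one]; exact this
          exact mul_left_cancel h21
        rw [hx1, orderOf_one] at hx
        exact hp.one_lt.ne' hx.symm
      · right
        obtain ⟨c, hc⟩ := isConj_iff.mp h
        have hcent : c * x ^ (2:ℤ) * c⁻¹ = x ^ (2:ℤ) := by
          rw [(Subgroup.mem_center_iff.mp hx2c) c]; group
        have heq : x ^ (2:ℤ) = x⁻¹ := hcent.symm.trans hc
        have hx3 : x ^ (3:ℕ) = 1 := by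
          have : x ^ (2:ℤ) * x = 1 := by rw [heq]; group
          have h3 : x ^ (3:ℤ) = 1 := by
            rw [show (3:ℤ) = 2 + 1 by norm_num, zpow_add, zpow_one]
            exact this
          rw [show (3:ℤ) = ((3:ℕ):ℤ) by norm_num, zpow_natCast] at h3
          exact h3
        have : p ∣ 3 := hx ▸ orderOf_dvd_of_pow_eq_one hx3
        exact ((Nat.prime_dvd_prime_iff_eq hp Nat.prime_three).mp this)
    · set Z := Subgroup.center G
      have hsplit : Nat.card G = Nat.card (G ⧸ Z) * Nat.card Z :=
        (Subgroup.card_eq_card_quotient_mul_card_subgroup Z)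
      have hpq : p ∣ Nat.card (G ⧸ Z) := by
        have : p ∣ Nat.card (G ⧸ Z) * Nat.card Z := by rw [← hsplit, hcard]; exact hpn
        exact (hp.dvd_mul.mp this).resolve_right hdvd
      have hZ2 : 1 < Nat.card Z := Finite.one_lt_card_iff_nontrivial.mpr ‹_›
      have hQpos : 0 < Nat.card (G ⧸ Z) := Nat.card_pos
      have hlt : Nat.card (G ⧸ Z) < n := by
        rw [← hcard, hsplit]
        nlinarith
      exact ih _ hlt (G ⧸ Z) rfl (isCutGroup_quotient Z hG) p hp hpq

theorem stmt_9 {G : Type*} [Group G] [Finite G] [Group.IsNilpotent G]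
    (hG : IsCutGroup G) :
    ∀ p : ℕ, p.Prime → p ∣ Nat.card G → p = 2 ∨ p = 3 := by
  exact stmt_aux (Nat.card G) G rfl hG
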